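/- Let N ≥ 1. There is a constant C > 0, depending only on N, such that for every compact set E ⊂ ℝ^{N+1} and every positive Borel measure μ supported on E whose potential satisfies P*μ(x̄) = ∫ P(x̄ − ȳ) dμ(ȳ) ≤ 1 for all x̄ ∈ ℝ^{N+1}, one has μ(E) ≤ C · H^N_∞(E). In particular, the capacity γ^{1/2}_{Θ,+}(E) := sup{ μ(E) : μ positive, supp μ ⊆ E, P*μ ≤ 1 everywhere } satisfies γ^{1/2}_{Θ,+}(E) ≤ C · H^N_∞(E). -/

import Mathlib

open MeasureTheory
open scoped ENNReal

/-- The 1/2-fractional heat kernel on `ℝ^{N+1}`, the last coordinate playing the role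
of time: `P(x,t) = t/(t² + |x|²)^{(N+1)/2} = t/‖(x,t)‖^{N+1}` for `t > 0`, else `0`. -/
noncomputable def PH (N : ℕ) (z : EuclideanSpace ℝ (Fin (N + 1))) : ℝ :=
  if 0 < z (Fin.last N) then z (Fin.last N) / ‖z‖ ^ (N + 1) else 0

/-- The `d`-dimensional Hausdorff content: `H^d_∞(E) = inf { Σ diam(Aᵢ)^d : E ⊆ ⋃ Aᵢ }`. -/
noncomputable def hContent {X : Type*} [EMetricSpace X] (d : ℝ) (E : Set X) : ℝ≥0∞ :=
  ⨅ (A : ℕ → Set X) (_ : E ⊆ ⋃ n, A n), ∑' n, EMetric.diam (A n) ^ d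

/-- For `N ≥ 1` there is `C > 0`, depending only on `N`, such that for every
compact `E ⊆ ℝ^{N+1}` and every positive measure `μ` supported on `E` with potential
`P*μ ≤ 1` everywhere, `μ(E) ≤ C·H^N_∞(E)`; in particular the capacity
`γ^{1/2}_{Θ,+}(E) = sup{μ(E)}` satisfies `γ^{1/2}_{Θ,+}(E) ≤ C·H^N_∞(E)`. -/

lemma coord_abs_le (N : ℕ) (x : EuclideanSpace ℝ (Fin (N+1))) (i : Fin (N+1)) :
    |x i| ≤ ‖x‖ := by
  rw [EuclideanSpace.norm_eq]
  calc |x i| = Real.sqrt ((x i)^2) := (Real.sqrt_sq_eq_abs _).symm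
    _ ≤ Real.sqrt (∑ j, ‖x j‖ ^ 2) := by
        apply Real.sqrt_le_sqrt
        have : (x i)^2 = ‖x i‖^2 := by simp [Real.norm_eq_abs, sq_abs]
        rw [this]
        exact Finset.single_le_sum (fun j _ => sq_nonneg ‖x j‖) (Finset.mem_univ i)

lemma ball_bound (N : ℕ) (μ : Measure (EuclideanSpace ℝ (Fin (N+1))))
    (hμ : ∀ x, (∫⁻ y, ENNReal.ofReal (PH N (x - y)) ∂μ) ≤ 1)
    (a : EuclideanSpace ℝ (Fin (N+1))) (r : ℝ) (hr : 0 < r) :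
    μ (Metric.closedBall a r) ≤ ENNReal.ofReal (3^(N+1) * r^N) := by
  set e : EuclideanSpace ℝ (Fin (N+1)) := EuclideanSpace.single (Fin.last N) (1:ℝ) with he
  set w : EuclideanSpace ℝ (Fin (N+1)) := a + (2*r) • e with hw
  set c : ℝ := r / (3*r)^(N+1) with hc
  have hcpos : 0 < c := by positivity
  have key : ∀ y ∈ Metric.closedBall a r, c ≤ PH N (w - y) := by
    intro y hy
    have hdist : ‖a - y‖ ≤ r := by
      rw [← dist_eq_norm]; rw [Metric.mem_closedBall] at hy
      rwa [dist_comm]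
    have hlast : (w - y) (Fin.last N) = 2*r + (a (Fin.last N) - y (Fin.last N)) := by
      simp [hw, he, EuclideanSpace.single_apply]
      ring
    have habs : |a (Fin.last N) - y (Fin.last N)| ≤ r :=
      (coord_abs_le N (a - y) (Fin.last N)).trans hdist
    have ht : r ≤ (w - y) (Fin.last N) := by
      rw [hlast]
      have := abs_le.mp habs
      linarith [this.1]
    have htpos : 0 < (w - y) (Fin.last N) := lt_of_lt_of_le hr ht
    have hnorm : ‖w - y‖ ≤ 3 * r := by
      have : w - y = (2*r) • e + (a - y) := by rw [hw]; abel
      rw [this]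
      calc ‖(2*r) • e + (a - y)‖ ≤ ‖(2*r) • e‖ + ‖a - y‖ := norm_add_le _ _
        _ ≤ 2*r + r := by
            rw [norm_smul, he, EuclideanSpace.norm_single]
            simp [abs_of_pos hr]
            linarith
        _ = 3 * r := by ring
    have hnormpos : 0 < ‖w - y‖ :=
      lt_of_lt_of_le htpos (le_trans (le_abs_self _) (coord_abs_le N (w - y) _))
    rw [PH, if_pos htpos, hc]
    apply div_le_div₀ (le_of_lt htpos) ht (by positivity)
    exact pow_le_pow_left₀ (le_of_lt (norm_pos_iff.mpr (norm_pos_iff.mp hnormpos))) hnorm _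
  -- integral estimate
  have h1 : ENNReal.ofReal c * μ (Metric.closedBall a r) ≤ 1 := by
    have := hμ w
    calc ENNReal.ofReal c * μ (Metric.closedBall a r)
        = ∫⁻ y in Metric.closedBall a r, ENNReal.ofReal c ∂μ := by
          rw [setLIntegral_const, mul_comm]
      _ = ∫⁻ y, (Metric.closedBall a r).indicator (fun _ => ENNReal.ofReal c) y ∂μ := by
          rw [lintegral_indicator measurableSet_closedBall]
      _ ≤ ∫⁻ y, ENNReal.ofReal (PH N (w - y)) ∂μ := by
          apply lintegral_mono
          intro y
          by_cases hy : y ∈ Metric.closedBall a r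
          · simp only [Set.indicator_of_mem hy]
            exact ENNReal.ofReal_le_ofReal (key y hy)
          · simp [Set.indicator_of_notMem hy]
      _ ≤ 1 := this
  have h2 : μ (Metric.closedBall a r) ≤ (ENNReal.ofReal c)⁻¹ := by
    rw [ENNReal.le_inv_iff_mul_le, mul_comm]; exact h1
  calc μ (Metric.closedBall a r) ≤ (ENNReal.ofReal c)⁻¹ := h2
    _ = ENNReal.ofReal c⁻¹ := (ENNReal.ofReal_inv_of_pos hcpos).symm
    _ = ENNReal.ofReal (3^(N+1) * r^N) := by
        congr 1
        rw [hc]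
        field_simp
        ring

lemma set_bound (N : ℕ) (hN : 1 ≤ N) (μ : Measure (EuclideanSpace ℝ (Fin (N+1))))
    (hμ : ∀ x, (∫⁻ y, ENNReal.ofReal (PH N (x - y)) ∂μ) ≤ 1)
    (A : Set (EuclideanSpace ℝ (Fin (N+1)))) :
    μ A ≤ ENNReal.ofReal (3^(N+1)) * EMetric.diam A ^ (N:ℝ) := by
  rcases Set.eq_empty_or_nonempty A with hA | ⟨a, ha⟩
  · simp [hA]
  by_cases hd : EMetric.diam A = ∞
  · rw [hd, ENNReal.top_rpow_of_pos (by exact_mod_cast Nat.pos_of_ne_zero (by omega)),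
      ENNReal.mul_top (by simp [ENNReal.ofReal_eq_zero])]
    exact le_top
  set r : ℝ := (EMetric.diam A).toReal with hrdef
  have hrnn : 0 ≤ r := ENNReal.toReal_nonneg
  have hsub : ∀ s : ℝ, r ≤ s → A ⊆ Metric.closedBall a s := by
    intro s hs y hy
    rw [Metric.mem_closedBall, dist_edist]
    refine le_trans (ENNReal.toReal_mono hd (EMetric.edist_le_diam_of_mem hy ha)) hs
  rcases lt_or_eq_of_le hrnn with hrpos | hr0
  · calc μ A ≤ μ (Metric.closedBall a r) := measure_mono (hsub r le_rfl)
      _ ≤ ENNReal.ofReal (3^(N+1) * r^N) := ball_bound N μ hμ a r hrpos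
      _ = ENNReal.ofReal (3^(N+1)) * EMetric.diam A ^ (N:ℝ) := by
          rw [ENNReal.ofReal_mul (by positivity), ENNReal.ofReal_pow hrnn,
            hrdef, ENNReal.ofReal_toReal hd, ← ENNReal.rpow_natCast]
  · -- diam = 0
    have htend : Filter.Tendsto (fun n : ℕ => ENNReal.ofReal (3^(N+1) * (1/(n+1:ℝ))^N))
        Filter.atTop (nhds 0) := by
      have h1 : Filter.Tendsto (fun n : ℕ => (3:ℝ)^(N+1) * (1/(n+1:ℝ))^N)
          Filter.atTop (nhds 0) := by
        have := (tendsto_one_div_add_atTop_nhds_zero_nat (𝕜 := ℝ)).pow N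
        rw [zero_pow (by omega)] at this
        simpa using this.const_mul ((3:ℝ)^(N+1))
      have := (ENNReal.continuous_ofReal.tendsto 0).comp h1
      rw [ENNReal.ofReal_zero] at this
      exact this
    have hμA : μ A ≤ 0 := by
      refine ge_of_tendsto' htend (fun n => ?_)
      calc μ A ≤ μ (Metric.closedBall a (1/(n+1:ℝ))) :=
            measure_mono (hsub _ (by rw [← hr0]; positivity))
        _ ≤ ENNReal.ofReal (3^(N+1) * (1/(n+1:ℝ))^N) :=
            ball_bound N μ hμ a _ (by positivity)
    simp [le_zero_iff.mp hμA]

theorem stmt8 (N : ℕ) (hN : 1 ≤ N) :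
    ∃ C : ℝ, 0 < C ∧
      ∀ E : Set (EuclideanSpace ℝ (Fin (N + 1))), IsCompact E →
        (∀ μ : Measure (EuclideanSpace ℝ (Fin (N + 1))), μ Eᶜ = 0 →
          (∀ x, (∫⁻ y, ENNReal.ofReal (PH N (x - y)) ∂μ) ≤ 1) →
          μ E ≤ ENNReal.ofReal C * hContent (N : ℝ) E) ∧
        sSup {m : ℝ≥0∞ | ∃ μ : Measure (EuclideanSpace ℝ (Fin (N + 1))), μ Eᶜ = 0 ∧
            (∀ x, (∫⁻ y, ENNReal.ofReal (PH N (x - y)) ∂μ) ≤ 1) ∧ m = μ E} ≤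
          ENNReal.ofReal C * hContent (N : ℝ) E := by
  refine ⟨3^(N+1), by positivity, fun E _hE => ?_⟩
  have main : ∀ μ : Measure (EuclideanSpace ℝ (Fin (N + 1))), μ Eᶜ = 0 →
      (∀ x, (∫⁻ y, ENNReal.ofReal (PH N (x - y)) ∂μ) ≤ 1) →
      μ E ≤ ENNReal.ofReal (3^(N+1)) * hContent (N : ℝ) E := by
    intro μ _hsupp hpot
    have hC0 : ENNReal.ofReal ((3:ℝ)^(N+1)) ≠ 0 := by
      simp [ENNReal.ofReal_eq_zero]
    have hCt : ENNReal.ofReal ((3:ℝ)^(N+1)) ≠ ∞ := ENNReal.ofReal_ne_top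
    rw [mul_comm, ← ENNReal.div_le_iff_le_mul (Or.inl hC0) (Or.inl hCt)]
    unfold hContent
    refine le_iInf₂ (fun A hA => ?_)
    rw [ENNReal.div_le_iff_le_mul (Or.inl hC0) (Or.inl hCt), mul_comm]
    calc μ E ≤ μ (⋃ n, A n) := measure_mono hA
      _ ≤ ∑' n, μ (A n) := measure_iUnion_le A
      _ ≤ ∑' n, ENNReal.ofReal ((3:ℝ)^(N+1)) * EMetric.diam (A n) ^ (N:ℝ) :=
          ENNReal.tsum_le_tsum (fun n => set_bound N hN μ hpot (A n))
      _ = ENNReal.ofReal ((3:ℝ)^(N+1)) * ∑' n, EMetric.diam (A n) ^ (N:ℝ) :=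
          ENNReal.tsum_mul_left
  refine ⟨main, sSup_le ?_⟩
  rintro m ⟨μ, hsupp, hpot, rfl⟩
  exact main μ hsupp hpot
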